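/- On two qubits (A = B = Fin 2), let |ψ₀⟩ = (|00⟩ + |11⟩)/√2 and |ψ₁⟩ = (|01⟩ + |10⟩)/√2, and define the coherent quantum non-local box Λ_NL on matrices indexed by (A × B) × (A × B) by Λ_NL[X] = (Tr(X) − X((1,1),(1,1)))·|ψ₀⟩⟨ψ₀| + X((1,1),(1,1))·|ψ₁⟩⟨ψ₁| (so that on a state ρ, Λ_NL[ρ] = (1−p)|ψ₀⟩⟨ψ₀| + p|ψ₁⟩⟨ψ₁| with p = ⟨11|ρ|11⟩). Then Λ_NL is a channel (completely positive and trace-preserving) and is causal. -/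

import Mathlib

open Matrix BigOperators
open scoped Kronecker ComplexOrder

noncomputable section

/-- Partial trace over the `A` factor. -/
def trA {A B : Type*} [Fintype A] (ρ : Matrix (A × B) (A × B) ℂ) : Matrix B B ℂ :=
  Matrix.of fun b b' => ∑ a, ρ (a, b) (a, b')

/-- Partial trace over the `B` factor. -/
def trB {A B : Type*} [Fintype B] (ρ : Matrix (A × B) (A × B) ℂ) : Matrix A A ℂ :=
  Matrix.of fun a a' => ∑ b, ρ (a, b) (a', b)

/-- A state: positive semidefinite matrix of trace 1. -/
def IsState {n : Type*} [Fintype n] (ρ : Matrix n n ℂ) : Prop :=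
  ρ.PosSemidef ∧ ρ.trace = 1

/-- A channel: a map admitting a Kraus representation `Λ[X] = ∑ i, K i * X * (K i)ᴴ`
with `∑ i, (K i)ᴴ * K i = 1` (completely positive and trace-preserving). -/
def IsChannel {n : Type*} [Fintype n] [DecidableEq n]
    (Λ : Matrix n n ℂ → Matrix n n ℂ) : Prop :=
  ∃ (m : ℕ) (K : Fin m → Matrix n n ℂ),
    (∀ X, Λ X = ∑ i, K i * X * (K i)ᴴ) ∧ (∑ i, (K i)ᴴ * K i = 1)

/-- The induced map `Γ ⊗ id` on the bipartite system, acting blockwise. -/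
def tensIdA {A B : Type*} (Γ : Matrix A A ℂ → Matrix A A ℂ)
    (ρ : Matrix (A × B) (A × B) ℂ) : Matrix (A × B) (A × B) ℂ :=
  Matrix.of fun p q => Γ (Matrix.of fun a a' => ρ (a, p.2) (a', q.2)) p.1 q.1

/-- The induced map `id ⊗ Γ` on the bipartite system, acting blockwise. -/
def tensIdB {A B : Type*} (Γ : Matrix B B ℂ → Matrix B B ℂ)
    (ρ : Matrix (A × B) (A × B) ℂ) : Matrix (A × B) (A × B) ℂ :=
  Matrix.of fun p q => Γ (Matrix.of fun b b' => ρ (p.1, b) (q.1, b')) p.2 q.2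

/-- `Λ` is A↛B semicausal: no channel applied by Alice beforehand affects Bob's
reduced output state. -/
def SemicausalAtoB {A B : Type*} [Fintype A] [Fintype B] [DecidableEq A]
    (Λ : Matrix (A × B) (A × B) ℂ → Matrix (A × B) (A × B) ℂ) : Prop :=
  ∀ ρ : Matrix (A × B) (A × B) ℂ, IsState ρ →
    ∀ Γ : Matrix A A ℂ → Matrix A A ℂ, IsChannel Γ →
      trA (Λ (tensIdA Γ ρ)) = trA (Λ ρ)

/-- `Λ` is A↚B semicausal: no channel applied by Bob beforehand affects Alice's
reduced output state. -/
def SemicausalBtoA {A B : Type*} [Fintype A] [Fintype B] [DecidableEq B]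
    (Λ : Matrix (A × B) (A × B) ℂ → Matrix (A × B) (A × B) ℂ) : Prop :=
  ∀ ρ : Matrix (A × B) (A × B) ℂ, IsState ρ →
    ∀ Γ : Matrix B B ℂ → Matrix B B ℂ, IsChannel Γ →
      trB (Λ (tensIdB Γ ρ)) = trB (Λ ρ)

/-- `Λ` is causal: both A↛B and A↚B semicausal. -/
def Causal {A B : Type*} [Fintype A] [Fintype B] [DecidableEq A] [DecidableEq B]
    (Λ : Matrix (A × B) (A × B) ℂ → Matrix (A × B) (A × B) ℂ) : Prop :=
  SemicausalAtoB Λ ∧ SemicausalBtoA Λ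

/-- The rank-one projector `|v⟩⟨v|` onto a vector `v`. -/
def projv {n : Type*} (v : n → ℂ) : Matrix n n ℂ :=
  Matrix.of fun i j => v i * star (v j)

/-- `|ψ₀⟩ = (|00⟩ + |11⟩)/√2`. -/
def psi0 : Fin 2 × Fin 2 → ℂ :=
  fun p => if p.1 = p.2 then ((Real.sqrt 2 : ℂ))⁻¹ else 0

/-- `|ψ₁⟩ = (|01⟩ + |10⟩)/√2`. -/
def psi1 : Fin 2 × Fin 2 → ℂ :=
  fun p => if p.1 ≠ p.2 then ((Real.sqrt 2 : ℂ))⁻¹ else 0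

/-- The coherent quantum non-local box
`Λ_NL[X] = (Tr(X) − X((1,1),(1,1)))·|ψ₀⟩⟨ψ₀| + X((1,1),(1,1))·|ψ₁⟩⟨ψ₁|`. -/
def lamNL (X : Matrix (Fin 2 × Fin 2) (Fin 2 × Fin 2) ℂ) :
    Matrix (Fin 2 × Fin 2) (Fin 2 × Fin 2) ℂ :=
  (X.trace - X (1, 1) (1, 1)) • projv psi0 + X (1, 1) (1, 1) • projv psi1

section Aux

private lemma hc_star : star ((Real.sqrt 2 : ℂ))⁻¹ = ((Real.sqrt 2 : ℂ))⁻¹ := by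
  rw [star_inv₀]
  norm_num [Complex.star_def, Complex.conj_ofReal]

private lemma hc_sq : ((Real.sqrt 2 : ℂ))⁻¹ * ((Real.sqrt 2 : ℂ))⁻¹ = 1/2 := by
  rw [← mul_inv]
  norm_cast
  rw [Real.mul_self_sqrt (by norm_num)]
  norm_num

private lemma channel_trace {n : Type*} [Fintype n] [DecidableEq n]
    {Γ : Matrix n n ℂ → Matrix n n ℂ} (h : IsChannel Γ) (M : Matrix n n ℂ) :
    (Γ M).trace = M.trace := by
  obtain ⟨m, K, hK, h1⟩ := h
  rw [hK, Matrix.trace_sum]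
  have hcyc : ∀ i, (K i * M * (K i)ᴴ).trace = ((K i)ᴴ * K i * M).trace := by
    intro i
    rw [Matrix.trace_mul_cycle, Matrix.mul_assoc]
  simp_rw [hcyc]
  rw [← Matrix.trace_sum]
  simp_rw [← Finset.sum_mul, h1, Matrix.one_mul]

private lemma trace_tensIdA {A B : Type*} [Fintype A] [Fintype B]
    (Γ : Matrix A A ℂ → Matrix A A ℂ) (h : ∀ M, (Γ M).trace = M.trace)
    (ρ : Matrix (A × B) (A × B) ℂ) : (tensIdA Γ ρ).trace = ρ.trace := by
  simp only [Matrix.trace, Matrix.diag, tensIdA, Matrix.of_apply, Fintype.sum_prod_type]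
  rw [Finset.sum_comm]
  refine (Finset.sum_congr rfl fun b _ => ?_).trans Finset.sum_comm
  exact h (Matrix.of fun a a' => ρ (a, b) (a', b))

private lemma trace_tensIdB {A B : Type*} [Fintype A] [Fintype B]
    (Γ : Matrix B B ℂ → Matrix B B ℂ) (h : ∀ M, (Γ M).trace = M.trace)
    (ρ : Matrix (A × B) (A × B) ℂ) : (tensIdB Γ ρ).trace = ρ.trace := by
  simp only [Matrix.trace, Matrix.diag, tensIdB, Matrix.of_apply, Fintype.sum_prod_type]
  refine Finset.sum_congr rfl fun a _ => ?_
  exact h (Matrix.of fun b b' => ρ (a, b) (a, b'))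

private lemma trA_lamNL (X : Matrix (Fin 2 × Fin 2) (Fin 2 × Fin 2) ℂ) :
    trA (lamNL X) = X.trace • (Matrix.of fun b b' : Fin 2 => if b = b' then (1/2 : ℂ) else 0) := by
  ext b b'
  simp only [trA, lamNL, Matrix.of_apply, Matrix.add_apply, Matrix.smul_apply, projv,
    Matrix.of_apply, smul_eq_mul, Fin.sum_univ_two]
  fin_cases b <;> fin_cases b' <;>
    simp [psi0, psi1, hc_star, hc_sq, Fin.ext_iff] <;> ring_nf <;>
    simp [hc_sq] <;> ring

private lemma trB_lamNL (X : Matrix (Fin 2 × Fin 2) (Fin 2 × Fin 2) ℂ) :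
    trB (lamNL X) = X.trace • (Matrix.of fun a a' : Fin 2 => if a = a' then (1/2 : ℂ) else 0) := by
  ext a a'
  simp only [trB, lamNL, Matrix.of_apply, Matrix.add_apply, Matrix.smul_apply, projv,
    Matrix.of_apply, smul_eq_mul, Fin.sum_univ_two]
  fin_cases a <;> fin_cases a' <;>
    simp [psi0, psi1, hc_star, hc_sq, Fin.ext_iff] <;> ring_nf <;>
    simp [hc_sq] <;> ring

/-- Kraus operator `|v⟩⟨e|`. -/
private def kraus {n : Type*} [DecidableEq n] (v : n → ℂ) (e : n) : Matrix n n ℂ :=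
  Matrix.of fun p q => v p * (if q = e then 1 else 0)

private lemma kraus_conj {n : Type*} [Fintype n] [DecidableEq n] (v : n → ℂ) (e : n)
    (X : Matrix n n ℂ) :
    kraus v e * X * (kraus v e)ᴴ = X e e • projv v := by
  ext p q
  simp only [Matrix.mul_apply, Matrix.conjTranspose_apply, kraus, Matrix.of_apply,
    Matrix.smul_apply, projv, smul_eq_mul, mul_ite, mul_one, mul_zero, ite_mul, zero_mul]
  simp [apply_ite (starRingEnd ℂ), mul_ite, Finset.sum_ite_eq', Finset.sum_ite_eq]
  ring

private lemma kraus_tp {n : Type*} [Fintype n] [DecidableEq n] (v : n → ℂ) (e : n)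
    (hv : ∑ r, star (v r) * v r = 1) :
    (kraus v e)ᴴ * kraus v e = Matrix.single e e 1 := by
  have hv' : ∑ r, (starRingEnd ℂ) (v r) * v r = 1 := hv
  ext p q
  simp only [Matrix.mul_apply, Matrix.conjTranspose_apply, kraus, Matrix.of_apply,
    Matrix.single]
  by_cases hp : p = e <;> by_cases hq : q = e
  · simp [hp, hq, hv', apply_ite (starRingEnd ℂ), mul_ite, ite_mul]
  · simp [hp, hq, Ne.symm hq, apply_ite (starRingEnd ℂ), mul_ite, ite_mul]
  · simp [hp, Ne.symm hp, hq, apply_ite (starRingEnd ℂ), mul_ite, ite_mul]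
  · simp [hp, hq, Ne.symm hp, Ne.symm hq, apply_ite (starRingEnd ℂ), mul_ite, ite_mul]

private lemma psi0_norm : ∑ r : Fin 2 × Fin 2, star (psi0 r) * psi0 r = 1 := by
  simp [Fintype.sum_prod_type, Fin.sum_univ_two, psi0, hc_star, hc_sq]

private lemma psi1_norm : ∑ r : Fin 2 × Fin 2, star (psi1 r) * psi1 r = 1 := by
  simp [Fintype.sum_prod_type, Fin.sum_univ_two, psi1, hc_star, hc_sq]
  norm_num

end Aux

/-- the coherent quantum non-local box `Λ_NL` is a channel and is
causal. -/

theorem stmt_18 : IsChannel lamNL ∧ Causal lamNL := by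
  constructor
  · refine ⟨4, ![kraus psi0 (0,0), kraus psi0 (0,1), kraus psi0 (1,0), kraus psi1 (1,1)],
      fun X => ?_, ?_⟩
    · simp only [Fin.sum_univ_four, Matrix.cons_val_zero, Matrix.cons_val_one, Matrix.head_cons,
        Matrix.cons_val_two, Matrix.tail_cons, Matrix.cons_val_three, kraus_conj]
      rw [lamNL, Matrix.trace]
      simp only [Matrix.diag, Fintype.sum_prod_type, Fin.sum_univ_two]
      module
    · simp only [Fin.sum_univ_four, Matrix.cons_val_zero, Matrix.cons_val_one, Matrix.head_cons,
        Matrix.cons_val_two, Matrix.tail_cons, Matrix.cons_val_three,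
        kraus_tp psi0 _ psi0_norm, kraus_tp psi1 _ psi1_norm]
      ext ⟨a, b⟩ ⟨a', b'⟩
      fin_cases a <;> fin_cases b <;> fin_cases a' <;> fin_cases b' <;>
        simp [Matrix.single, Matrix.one_apply, Prod.ext_iff]
  · constructor
    · intro ρ _ Γ hΓ
      rw [trA_lamNL, trA_lamNL, trace_tensIdA Γ (channel_trace hΓ)]
    · intro ρ _ Γ hΓ
      rw [trB_lamNL, trB_lamNL, trace_tensIdB Γ (channel_trace hΓ)]
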